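/- arXiv:2403.06425 — 4 statements merged into one kernel-verified Lean document; each statement's English description precedes it below -/
import Mathlib

section
/- Let p : (Fin k → ℝ) → Fin c → ℝ be a parametric family of probability mass functions with p(θ)(x) > 0 near θ₀, each θ ↦ p(θ)(x) twice continuously differentiable near θ₀, and Σ_x p(θ)(x) = 1 near θ₀. Define KL(δ) = Σ_x p(θ₀)(x) · log(p(θ₀)(x) / p(θ₀ + δ)(x)). Then KL(δ) − (1/2)·Σ_x p(θ₀)(x) · (D(log p(·)(x))(θ₀)(δ))² = o(‖δ‖²) as δ → 0; that is, the KL divergence is locally a quadratic form given by the Fisher information up to second order. -/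
open Finset Asymptotics

lemma phi_littleO : (fun t : ℝ => t - Real.log (1 + t) - t ^ 2 / 2) =o[nhds 0] fun t => t ^ 2 := by
  rw [isLittleO_iff]
  intro ε hε
  have h1 : ∀ᶠ t : ℝ in nhds 0, |t| < min (1/2) (ε/2) := by
    have h : Filter.Tendsto (fun t : ℝ => |t|) (nhds 0) (nhds 0) := by
      simpa using continuous_abs.tendsto (0:ℝ)
    exact h.eventually_lt_const (by positivity)
  filter_upwards [h1] with t ht
  have ht2 : |t| < 1/2 := lt_of_lt_of_le ht (min_le_left _ _)
  have ht3 : |t| < ε/2 := lt_of_lt_of_le ht (min_le_right _ _)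
  have hx : |(-t)| < 1 := by rw [abs_neg]; linarith
  have hb := Real.abs_log_sub_add_sum_range_le hx 2
  simp only [Finset.sum_range_succ, Finset.sum_range_zero] at hb
  norm_num at hb
  have key : |t - Real.log (1 + t) - t ^ 2 / 2| ≤ |t| ^ 3 / (1 - |t|) := by
    rw [show t - Real.log (1 + t) - t ^ 2 / 2
        = -(-t + t ^ 2 / 2 + Real.log (1 + t)) by ring, abs_neg]
    convert hb using 2
  have h2 : |t| ^ 3 / (1 - |t|) ≤ 2 * |t| ^ 3 := by
    rw [div_le_iff₀ (by linarith)]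
    nlinarith [pow_nonneg (abs_nonneg t) 3]
  rw [Real.norm_eq_abs, Real.norm_eq_abs, abs_of_nonneg (sq_nonneg t)]
  have hcube : |t| ^ 3 = t ^ 2 * |t| := by
    rw [show (3:ℕ) = 2 + 1 by rfl, pow_succ, sq_abs]
  nlinarith [sq_nonneg t, abs_nonneg t]

lemma key_aux {k : ℕ} (u : (Fin k → ℝ) → ℝ) (a : ℝ) (ha : 0 < a)
    (D : (Fin k → ℝ) →L[ℝ] ℝ) (hu0 : u 0 = a) (hD : HasFDerivAt u D 0) :
    (fun δ => u δ - a - a * Real.log (u δ / a) - (1/2) * (a * ((a⁻¹ • D) δ) ^ 2))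
      =o[nhds 0] fun δ => ‖δ‖ ^ 2 := by
  set v : (Fin k → ℝ) → ℝ := fun δ => a⁻¹ * u δ - 1 with hvdef
  set L : (Fin k → ℝ) →L[ℝ] ℝ := a⁻¹ • D with hLdef
  have hv : HasFDerivAt v L 0 := (hD.const_mul a⁻¹).sub_const 1
  have hv0 : v 0 = 0 := by simp [hvdef, hu0, inv_mul_cancel₀ ha.ne']
  have htend : Filter.Tendsto v (nhds 0) (nhds 0) := by
    simpa [hv0] using hv.continuousAt.tendsto
  have hlin : (fun δ => v δ - L δ) =o[nhds 0] fun δ : Fin k → ℝ => ‖δ‖ := by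
    have h := hasFDerivAt_iff_isLittleO_nhds_zero.mp hv
    simp only [zero_add, hv0, sub_zero] at h
    exact h.norm_right
  have hvO : v =O[nhds 0] fun δ : Fin k → ℝ => ‖δ‖ := by
    have h := hv.isBigO_sub
    simp only [hv0, sub_zero] at h
    exact h.norm_right
  have hLO : (fun δ => L δ) =O[nhds 0] fun δ : Fin k → ℝ => ‖δ‖ :=
    (L.isBigO_id (nhds 0)).norm_right
  have hphi : (fun δ => v δ - Real.log (1 + v δ) - (v δ) ^ 2 / 2)
      =o[nhds 0] fun δ => (v δ) ^ 2 := phi_littleO.comp_tendsto htend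
  have hv2 : (fun δ => (v δ) ^ 2) =O[nhds 0] fun δ : Fin k → ℝ => ‖δ‖ ^ 2 := by
    simpa [pow_two] using hvO.mul hvO
  have t1 : (fun δ => a * (v δ - Real.log (1 + v δ) - (v δ) ^ 2 / 2))
      =o[nhds 0] fun δ : Fin k → ℝ => ‖δ‖ ^ 2 :=
    (hphi.trans_isBigO hv2).const_mul_left a
  have t2 : (fun δ => (a/2) * ((v δ - L δ) * (v δ + L δ)))
      =o[nhds 0] fun δ : Fin k → ℝ => ‖δ‖ ^ 2 := by
    have hmul := hlin.mul_isBigO (hvO.add hLO)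
    have := hmul.const_mul_left (a/2)
    simpa [pow_two] using this
  have hsum := t1.add t2
  refine hsum.congr' (Filter.Eventually.of_forall fun δ => ?_) Filter.EventuallyEq.rfl
  have h1 : (1:ℝ) + v δ = u δ / a := by
    simp only [hvdef]
    field_simp
    ring
  show a * (v δ - Real.log (1 + v δ) - v δ ^ 2 / 2)
      + a / 2 * ((v δ - L δ) * (v δ + L δ))
      = u δ - a - a * Real.log (u δ / a) - 1 / 2 * (a * (L δ) ^ 2)
  rw [h1]
  set w := Real.log (u δ / a) with hw
  simp only [hvdef]
  field_simp
  ring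

theorem stmt6 (k c : ℕ) (hk : 0 < k) (hc : 0 < c)
    (p : (Fin k → ℝ) → Fin c → ℝ) (θ₀ : Fin k → ℝ)
    (hpos : ∀ᶠ θ in nhds θ₀, ∀ x : Fin c, 0 < p θ x)
    (hdiff : ∀ x : Fin c, ContDiffAt ℝ 2 (fun θ => p θ x) θ₀)
    (hsum : ∀ᶠ θ in nhds θ₀, ∑ x, p θ x = 1) :
    (fun δ : Fin k → ℝ =>
        (∑ x : Fin c, p θ₀ x * Real.log (p θ₀ x / p (θ₀ + δ) x))
          - (1 / 2) * ∑ x : Fin c,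
              p θ₀ x * (fderiv ℝ (fun θ => Real.log (p θ x)) θ₀ δ) ^ 2)
      =o[nhds 0] fun δ => ‖δ‖ ^ 2 := by
  have hpos0 : ∀ x, 0 < p θ₀ x := hpos.self_of_nhds
  have key : ∀ x : Fin c,
      (fun δ : Fin k → ℝ => p (θ₀ + δ) x - p θ₀ x
          - p θ₀ x * Real.log (p (θ₀ + δ) x / p θ₀ x)
          - (1/2) * (p θ₀ x * (fderiv ℝ (fun θ => Real.log (p θ x)) θ₀ δ) ^ 2))
        =o[nhds 0] fun δ => ‖δ‖ ^ 2 := by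
    intro x
    have hd : DifferentiableAt ℝ (fun θ => p θ x) θ₀ :=
      (hdiff x).differentiableAt (by norm_num)
    have hD : HasFDerivAt (fun θ => p θ x) (fderiv ℝ (fun θ => p θ x) θ₀) θ₀ :=
      hd.hasFDerivAt
    have hlog : HasFDerivAt (fun θ => Real.log (p θ x))
        ((p θ₀ x)⁻¹ • fderiv ℝ (fun θ => p θ x) θ₀) θ₀ := hD.log (hpos0 x).ne'
    have hL : fderiv ℝ (fun θ => Real.log (p θ x)) θ₀
        = (p θ₀ x)⁻¹ • fderiv ℝ (fun θ => p θ x) θ₀ := hlog.fderiv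
    have h1 : HasFDerivAt (fun δ : Fin k → ℝ => θ₀ + δ)
        (ContinuousLinearMap.id ℝ (Fin k → ℝ)) 0 := by
      simpa using (hasFDerivAt_id (𝕜 := ℝ) (0 : Fin k → ℝ)).const_add θ₀
    have h2 : HasFDerivAt (fun θ => p θ x) (fderiv ℝ (fun θ => p θ x) θ₀)
        ((fun δ : Fin k → ℝ => θ₀ + δ) 0) := by simpa using hD
    have hshift : HasFDerivAt (fun δ : Fin k → ℝ => p (θ₀ + δ) x)
        (fderiv ℝ (fun θ => p θ x) θ₀) 0 := by
      simpa [Function.comp_def] using h2.comp 0 h1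
    simp only [hL]
    exact key_aux (fun δ => p (θ₀ + δ) x) (p θ₀ x) (hpos0 x) _ (by simp) hshift
  have hsumall := Asymptotics.IsLittleO.sum (fun x (_ : x ∈ Finset.univ) => key x)
  have hev1 : ∀ᶠ δ : Fin k → ℝ in nhds 0, ∑ x, p (θ₀ + δ) x = 1 := by
    have ht : Filter.Tendsto (fun δ : Fin k → ℝ => θ₀ + δ) (nhds 0) (nhds θ₀) := by
      have := (Filter.tendsto_id (x := nhds (0 : Fin k → ℝ))).const_add θ₀
      simpa using this
    exact ht.eventually hsum
  have hsum0 : ∑ x, p θ₀ x = 1 := hsum.self_of_nhds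
  refine hsumall.congr' ?_ Filter.EventuallyEq.rfl
  filter_upwards [hev1] with δ hδ
  have hterm : ∀ x : Fin c, p θ₀ x * Real.log (p θ₀ x / p (θ₀ + δ) x)
      = -(p θ₀ x * Real.log (p (θ₀ + δ) x / p θ₀ x)) := by
    intro x
    rw [← inv_div, Real.log_inv, mul_neg]
  rw [Finset.sum_apply, Finset.sum_sub_distrib, Finset.sum_sub_distrib, Finset.sum_sub_distrib, hδ, hsum0,
    Finset.sum_congr rfl (fun x _ => hterm x), Finset.sum_neg_distrib, ← Finset.mul_sum]
  ring
end

section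
/- Let c be a positive natural number and define logsumexp(z) = log(Σ_j exp(z(j))) for z : Fin c → ℝ. Then logsumexp is twice differentiable everywhere, and its second derivative at z in directions u, v ∈ ℝ^c equals Σ_j p(j)·u(j)·v(j) − (Σ_j p(j)·u(j))·(Σ_j p(j)·v(j)), where p = softmax(z). -/
open Finset

/-- Softmax of a logit vector. -/
noncomputable def softmax {c : ℕ} (z : Fin c → ℝ) : Fin c → ℝ :=
  fun j => Real.exp (z j) / ∑ k, Real.exp (z k)

/-- log-sum-exp of a logit vector. -/
noncomputable def logsumexp {c : ℕ} (z : Fin c → ℝ) : ℝ :=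
  Real.log (∑ j, Real.exp (z j))

theorem stmt7 (c : ℕ) (hc : 0 < c) :
    ContDiff ℝ 2 (logsumexp (c := c)) ∧
    ∀ (z u v : Fin c → ℝ),
      fderiv ℝ (fderiv ℝ (logsumexp (c := c))) z u v
        = ∑ j, softmax z j * u j * v j
          - (∑ j, softmax z j * u j) * (∑ j, softmax z j * v j) := by
  classical
  haveI : Nonempty (Fin c) := Fin.pos_iff_nonempty.mp hc
  have hF : ∀ z : Fin c → ℝ, 0 < ∑ k, Real.exp (z k) := fun z =>
    Finset.sum_pos (fun k _ => Real.exp_pos _) Finset.univ_nonempty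
  have hFc : ContDiff ℝ 2 (fun z : Fin c → ℝ => ∑ k, Real.exp (z k)) :=
    ContDiff.sum fun k _ =>
      Real.contDiff_exp.comp ((ContinuousLinearMap.proj k : (Fin c → ℝ) →L[ℝ] ℝ).contDiff)
  have hlse : ContDiff ℝ 2 (logsumexp (c := c)) := hFc.log fun z => (hF z).ne'
  set G : (Fin c → ℝ) → ((Fin c → ℝ) →L[ℝ] ℝ) :=
    fun z => ∑ j, softmax z j • (ContinuousLinearMap.proj j : (Fin c → ℝ) →L[ℝ] ℝ) with hGdef
  have hG : ∀ z : Fin c → ℝ, HasFDerivAt (logsumexp (c := c)) (G z) z := by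
    intro z
    have hFd : HasFDerivAt (fun z : Fin c → ℝ => ∑ k, Real.exp (z k))
        (∑ j, Real.exp (z j) • (ContinuousLinearMap.proj j : (Fin c → ℝ) →L[ℝ] ℝ)) z :=
      HasFDerivAt.fun_sum fun j _ =>
        (ContinuousLinearMap.proj j : (Fin c → ℝ) →L[ℝ] ℝ).hasFDerivAt.exp
    have h := hFd.log (hF z).ne'
    convert h using 1
    any_goals rfl
    rw [Finset.smul_sum]
    refine Finset.sum_congr rfl fun j _ => ?_
    rw [smul_smul]
    congr 1
    simp [softmax, div_eq_inv_mul]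
  have hfd : fderiv ℝ (logsumexp (c := c)) = G := funext fun z => (hG z).fderiv
  refine ⟨hlse, fun z u v => ?_⟩
  have hdG : DifferentiableAt ℝ G z := by
    have h1 : ContDiff ℝ 1 (fderiv ℝ (logsumexp (c := c))) :=
      hlse.fderiv_right (by norm_num)
    rw [hfd] at h1
    exact (h1.differentiable (by norm_num)).differentiableAt
  rw [hfd]
  have key : fderiv ℝ (fun y => G y v) z = (fderiv ℝ G z).flip v := by
    rw [fderiv_clm_apply hdG (differentiableAt_const v)]
    simp
  have hGv : (fderiv ℝ G z) u v = (fderiv ℝ (fun y => G y v) z) u := by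
    rw [key]; rfl
  have hfun : (fun y : Fin c → ℝ => G y v)
      = fun y => ∑ j, Real.exp (y j - logsumexp y) * v j := by
    funext y
    simp only [hGdef, ContinuousLinearMap.sum_apply, ContinuousLinearMap.smul_apply,
      ContinuousLinearMap.proj_apply, smul_eq_mul]
    refine Finset.sum_congr rfl fun j _ => ?_
    rw [softmax, logsumexp, Real.exp_sub, Real.exp_log (hF y)]
  have hD : HasFDerivAt (fun y : Fin c → ℝ => G y v)
      (∑ j, v j • (Real.exp (z j - logsumexp z) •
        ((ContinuousLinearMap.proj j : (Fin c → ℝ) →L[ℝ] ℝ) - G z))) z := by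
    rw [hfun]
    exact HasFDerivAt.fun_sum fun j _ =>
      (((ContinuousLinearMap.proj j : (Fin c → ℝ) →L[ℝ] ℝ).hasFDerivAt.sub (hG z)).exp).mul_const
        (v j)
  rw [hGv, hD.fderiv]
  have hsm : ∀ j, Real.exp (z j - logsumexp z) = softmax z j := by
    intro j
    rw [softmax, logsumexp, Real.exp_sub, Real.exp_log (hF z)]
  have hGu : G z u = ∑ k, softmax z k * u k := by
    simp [hGdef]
  simp only [ContinuousLinearMap.sum_apply, ContinuousLinearMap.smul_apply,
    ContinuousLinearMap.sub_apply, ContinuousLinearMap.proj_apply, smul_eq_mul, hsm, hGu]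
  have halg : ∀ j, v j * (softmax z j * (u j - ∑ k, softmax z k * u k))
      = softmax z j * u j * v j
        - (∑ k, softmax z k * u k) * (softmax z j * v j) := fun j => by ring
  simp only [halg, Finset.sum_sub_distrib, ← Finset.mul_sum]
end

section
/- Let c, m be positive natural numbers, z* : Fin c → ℝ, C0, C1, ΔC : Fin m → Fin c → ℝ, and set z1(j) = z*(j) + Σ_p C1(p, j), P1 = softmax(z1). For x ∈ ℝ^m define z(x)(j) = z*(j) + Σ_p (C0(p, j) + ΔC(p, j)·x(p)) and P(x) = softmax(z(x)), and let f(x) = Σ_j P1(j)·Σ_p (C1(p, j) − C0(p, j) − ΔC(p, j)·x(p)) + log(Σ_j exp(z(x)(j))). Then for every x ∈ ℝ^m, f(x) = D_KL(P1 ‖ P(x)) + log(Σ_j exp(z1(j))); consequently f(x) ≥ log(Σ_j exp(z1(j))), with equality if and only if P(x) = P1. -/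
open Finset

/-- Kullback–Leibler divergence between two probability vectors on `Fin c`. -/
noncomputable def KL {c : ℕ} (p q : Fin c → ℝ) : ℝ :=
  ∑ j, p j * Real.log (p j / q j)

lemma sum_exp_pos {c : ℕ} (hc : 0 < c) (z : Fin c → ℝ) :
    0 < ∑ k, Real.exp (z k) :=
  Finset.sum_pos (fun k _ => Real.exp_pos _) (by simpa using Finset.univ_nonempty_iff.2 (Fin.pos_iff_nonempty.1 hc))

lemma softmax_pos {c : ℕ} (hc : 0 < c) (z : Fin c → ℝ) (j : Fin c) :
    0 < softmax z j :=
  div_pos (Real.exp_pos _) (sum_exp_pos hc z)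

lemma softmax_sum_one {c : ℕ} (hc : 0 < c) (z : Fin c → ℝ) :
    ∑ j, softmax z j = 1 := by
  unfold softmax
  rw [← Finset.sum_div]
  exact div_self (ne_of_gt (sum_exp_pos hc z))

lemma term_nonneg (a b : ℝ) (ha : 0 < a) (hb : 0 < b) :
    0 ≤ a * Real.log (a / b) - (a - b) ∧
    (a * Real.log (a / b) - (a - b) = 0 ↔ b = a) := by
  have ht : 0 < b / a := div_pos hb ha
  have hlog : Real.log (a / b) = - Real.log (b / a) := by
    rw [← Real.log_inv]; congr 1; field_simp
  have key : a * Real.log (a / b) - (a - b) = a * ((b / a - 1) - Real.log (b / a)) := by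
    rw [hlog]; field_simp; ring
  have h1 : Real.log (b / a) ≤ b / a - 1 := Real.log_le_sub_one_of_pos ht
  constructor
  · rw [key]
    exact mul_nonneg ha.le (by linarith)
  · rw [key]
    constructor
    · intro h
      have h2 : (b / a - 1) - Real.log (b / a) = 0 := by
        rcases mul_eq_zero.1 h with h' | h'
        · exact absurd h' (ne_of_gt ha)
        · exact h'
      by_contra hne
      have hne' : b / a ≠ 1 := by
        intro h3
        exact hne (by field_simp at h3; linarith)
      have := Real.log_lt_sub_one_of_pos ht hne'
      linarith
    · intro h
      subst h
      rw [div_self (ne_of_gt ha), Real.log_one]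
      ring

lemma KL_nonneg_eq {c : ℕ} (p q : Fin c → ℝ) (hp : ∀ j, 0 < p j) (hq : ∀ j, 0 < q j)
    (hps : ∑ j, p j = 1) (hqs : ∑ j, q j = 1) :
    0 ≤ KL p q ∧ (KL p q = 0 ↔ q = p) := by
  have hKL : KL p q = ∑ j, (p j * Real.log (p j / q j) - (p j - q j)) := by
    unfold KL
    rw [Finset.sum_sub_distrib, Finset.sum_sub_distrib, hps, hqs]
    ring
  have hterm := fun j => term_nonneg (p j) (q j) (hp j) (hq j)
  constructor
  · rw [hKL]
    exact Finset.sum_nonneg fun j _ => (hterm j).1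
  · rw [hKL]
    rw [Finset.sum_eq_zero_iff_of_nonneg (fun j _ => (hterm j).1)]
    constructor
    · intro h
      funext j
      exact (hterm j).2.1 (h j (Finset.mem_univ j))
    · intro h j _
      exact (hterm j).2.2 (by rw [h])

theorem stmt13 (c m : ℕ) (hc : 0 < c) (hm : 0 < m)
    (zstar : Fin c → ℝ) (C0 C1 dC : Fin m → Fin c → ℝ)
    (z1 : Fin c → ℝ) (hz1 : z1 = fun j => zstar j + ∑ p, C1 p j)
    (P1 : Fin c → ℝ) (hP1 : P1 = softmax z1)
    (zx : (Fin m → ℝ) → Fin c → ℝ)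
    (hzx : zx = fun x j => zstar j + ∑ p, (C0 p j + dC p j * x p))
    (f : (Fin m → ℝ) → ℝ)
    (hf : f = fun x =>
      ∑ j, P1 j * (∑ p, (C1 p j - C0 p j - dC p j * x p))
        + Real.log (∑ j, Real.exp (zx x j))) :
    ∀ x : Fin m → ℝ,
      f x = KL P1 (softmax (zx x)) + Real.log (∑ j, Real.exp (z1 j)) ∧
      Real.log (∑ j, Real.exp (z1 j)) ≤ f x ∧
      (f x = Real.log (∑ j, Real.exp (z1 j)) ↔ softmax (zx x) = P1) := by
  intro x
  set S1 : ℝ := ∑ j, Real.exp (z1 j) with hS1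
  set Sx : ℝ := ∑ j, Real.exp (zx x j) with hSx
  have hS1pos : 0 < S1 := sum_exp_pos hc z1
  have hSxpos : 0 < Sx := sum_exp_pos hc (zx x)
  have hP1pos : ∀ j, 0 < P1 j := by rw [hP1]; exact softmax_pos hc z1
  have hP1sum : ∑ j, P1 j = 1 := by rw [hP1]; exact softmax_sum_one hc z1
  have hQpos : ∀ j, 0 < softmax (zx x) j := softmax_pos hc (zx x)
  have hQsum : ∑ j, softmax (zx x) j = 1 := softmax_sum_one hc (zx x)
  -- key identity
  have hdiff : ∀ j, ∑ p, (C1 p j - C0 p j - dC p j * x p) = z1 j - zx x j := by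
    intro j
    rw [hz1, hzx]
    simp only [Finset.sum_sub_distrib, Finset.sum_add_distrib]
    ring
  have hlogterm : ∀ j, Real.log (P1 j / softmax (zx x) j)
      = (z1 j - zx x j) + (Real.log Sx - Real.log S1) := by
    intro j
    rw [hP1]
    unfold softmax
    rw [← hS1, ← hSx]
    have h : Real.exp (z1 j) / S1 / (Real.exp (zx x j) / Sx)
        = (Real.exp (z1 j) * Sx) / (Real.exp (zx x j) * S1) := by
      field_simp
    rw [h, Real.log_div (by positivity) (by positivity),
        Real.log_mul (Real.exp_ne_zero _) (ne_of_gt hSxpos),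
        Real.log_mul (Real.exp_ne_zero _) (ne_of_gt hS1pos),
        Real.log_exp, Real.log_exp]
    ring
  have hKLcalc : KL P1 (softmax (zx x))
      = ∑ j, P1 j * (z1 j - zx x j) + (Real.log Sx - Real.log S1) := by
    unfold KL
    have : ∀ j ∈ Finset.univ, P1 j * Real.log (P1 j / softmax (zx x) j)
        = P1 j * (z1 j - zx x j) + P1 j * (Real.log Sx - Real.log S1) := by
      intro j _
      rw [hlogterm j]; ring
    rw [Finset.sum_congr rfl this, Finset.sum_add_distrib, ← Finset.sum_mul, hP1sum, one_mul]
  have hfx : f x = ∑ j, P1 j * (z1 j - zx x j) + Real.log Sx := by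
    rw [hf]
    simp only
    congr 1
    exact Finset.sum_congr rfl fun j _ => by rw [hdiff j]
  have hmain : f x = KL P1 (softmax (zx x)) + Real.log S1 := by
    rw [hfx, hKLcalc]; ring
  obtain ⟨hKLnn, hKLiff⟩ := KL_nonneg_eq P1 (softmax (zx x)) hP1pos hQpos hP1sum hQsum
  refine ⟨hmain, ?_, ?_⟩
  · rw [hmain]; linarith
  · rw [hmain]
    constructor
    · intro h
      exact hKLiff.1 (by linarith)
    · intro h
      rw [hKLiff.2 h]; ring
end

section
/- (GNN-LRP is a special case of the DeepLIFT path attribution when the reference is the empty graph.) Let T ≥ 1 and let I₀, …, I_T be finite index sets of neurons per layer. Let h_t : I_t → ℝ (activations) for t = 0, …, T, z_t : I_t → ℝ (pre-activations) for t = 1, …, T, and θ_t : I_{t−1} → I_t → ℝ (weights) for t = 1, …, T. Fix a path u_0 ∈ I₀, u_1 ∈ I₁, …, u_T ∈ I_T and assume z_t(u_t) ≠ 0 for all t = 1, …, T. Define the GNN-LRP relevance of the path as R = (∏_{t=1}^{T} h_{t−1}(u_{t−1})·θ_t(u_{t−1}, u_t) / z_t(u_t)) · z_T(u_T), and the DeepLIFT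 contribution with zero reference activations as C = h_0(u_0) · (∏_{t=1}^{T−1} (h_t(u_t)/z_t(u_t))·θ_t(u_{t−1}, u_t)) · θ_T(u_{T−1}, u_T). Then R = C. -/
open Finset

/-- GNN-LRP path relevance equals the DeepLIFT path contribution with zero
reference activations.  We write the number of layers `T ≥ 1` as `T = Tp + 1`. -/
theorem stmt14 (Tp : ℕ) (I : ℕ → Type) [∀ t, Fintype (I t)]
    (h z : (t : ℕ) → I t → ℝ)
    (θ : (t : ℕ) → I t → I (t + 1) → ℝ)
    (u : (t : ℕ) → I t)
    (hz : ∀ t ∈ Finset.range (Tp + 1), z (t + 1) (u (t + 1)) ≠ 0) :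
    (∏ t ∈ Finset.range (Tp + 1),
        h t (u t) * θ t (u t) (u (t + 1)) / z (t + 1) (u (t + 1)))
        * z (Tp + 1) (u (Tp + 1))
      = h 0 (u 0)
        * (∏ t ∈ Finset.range Tp,
            (h (t + 1) (u (t + 1)) / z (t + 1) (u (t + 1))) * θ t (u t) (u (t + 1)))
        * θ Tp (u Tp) (u (Tp + 1)) := by
  induction Tp with
  | zero =>
    have h1 := hz 0 (by simp)
    simp only [zero_add, Finset.prod_range_one, Finset.prod_range_zero] at h1 ⊢
    field_simp
  | succ n ih =>
    have hzn : ∀ t ∈ Finset.range (n + 1), z (t + 1) (u (t + 1)) ≠ 0 := by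
      intro t ht
      exact hz t (Finset.mem_range.mpr (Nat.lt_succ_of_lt (Finset.mem_range.mp ht)))
    have hlast := hz (n + 1) (by simp)
    have hn1 := hz n (Finset.mem_range.mpr (by omega))
    have key := ih hzn
    rw [Finset.prod_range_succ, Finset.prod_range_succ
      (f := fun t => (h (t + 1) (u (t + 1)) / z (t + 1) (u (t + 1))) * θ t (u t) (u (t + 1)))]
    have : (∏ t ∈ Finset.range (n + 1),
        h t (u t) * θ t (u t) (u (t + 1)) / z (t + 1) (u (t + 1)))
        = (h 0 (u 0)
        * (∏ t ∈ Finset.range n,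
            (h (t + 1) (u (t + 1)) / z (t + 1) (u (t + 1))) * θ t (u t) (u (t + 1)))
        * θ n (u n) (u (n + 1))) / z (n + 1) (u (n + 1)) := by
      rw [eq_div_iff hn1]; exact key
    rw [this]
    have hp : (∏ x ∈ Finset.range n, z (x + 1) (u (x + 1))) ≠ 0 :=
      Finset.prod_ne_zero_iff.mpr
        (fun i hi => hzn i (Finset.mem_range.mpr (by have := Finset.mem_range.mp hi; omega)))
    field_simp
end
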